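/- arXiv:1602.08162 — 4 statements merged into one kernel-verified Lean document; each statement's English description precedes it below -/
import Mathlib

section
/- In a bipartite graph, the maximum size of a matching equals the minimum size of a vertex cover (König's theorem). -/
open Finset

section KonigAux

variable {V : Type*} [Fintype V] [DecidableEq V]

/-- Easy direction: any matching has size at most any vertex cover. -/
lemma konig_easy (G : SimpleGraph V) (M : Finset (Sym2 V)) (hM : ↑M ⊆ G.edgeSet)
    (hpair : (M : Set (Sym2 V)).Pairwise fun e f => ∀ v : V, v ∈ e → v ∉ f)
    (S : Finset V) (hS : ∀ e ∈ G.edgeSet, ∃ v ∈ S, v ∈ e) :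
    M.card ≤ S.card := by
  classical
  have hch : ∀ e ∈ M, ∃ v ∈ S, v ∈ e := fun e he => hS e (hM he)
  set f : Sym2 V → V := fun e => if h : ∃ v ∈ S, v ∈ e then h.choose else (Quot.out e).1
    with hfdef
  apply Finset.card_le_card_of_injOn f
  · intro e he
    have h := hch e he
    simp only [hfdef, dif_pos h]
    exact h.choose_spec.1
  · intro e he e' he' hfe
    by_contra hne
    have h := hch e (by simpa using he)
    have h' := hch e' (by simpa using he')
    have hv : f e ∈ e := by simp only [hfdef, dif_pos h]; exact h.choose_spec.2
    have hv' : f e' ∈ e' := by simp only [hfdef, dif_pos h']; exact h'.choose_spec.2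
    exact hpair (by simpa using he) (by simpa using he') hne (f e) hv (hfe ▸ hv')

/-- Hall's condition holds for the color-`i` part of a minimum vertex cover,
with neighborhoods taken outside the cover. -/
lemma konig_hall (G : SimpleGraph V) [DecidableRel G.Adj] (c : G.Coloring (Fin 2))
    (C : Finset V) (hC : ∀ e ∈ G.edgeSet, ∃ v ∈ C, v ∈ e)
    (hmin : ∀ D : Finset V, (∀ e ∈ G.edgeSet, ∃ v ∈ D, v ∈ e) → C.card ≤ D.card)
    (i : Fin 2)
    (s : Finset {x // x ∈ C.filter (fun v => c v = i)}) :
    s.card ≤ (s.biUnion (fun a => Finset.univ.filter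
      (fun b => G.Adj a.1 b ∧ b ∉ C))).card := by
  classical
  set N := s.biUnion (fun a => Finset.univ.filter (fun b => G.Adj a.1 b ∧ b ∉ C)) with hN
  set S := s.image (fun a => a.1) with hS
  have hScard : S.card = s.card := Finset.card_image_of_injective _ Subtype.val_injective
  have hSsub : S ⊆ C := by
    intro x hx
    simp only [hS, Finset.mem_image] at hx
    obtain ⟨a, _, rfl⟩ := hx
    exact (Finset.mem_filter.mp a.2).1
  have hScol : ∀ x ∈ S, c x = i := by
    intro x hx
    simp only [hS, Finset.mem_image] at hx
    obtain ⟨a, _, rfl⟩ := hx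
    exact (Finset.mem_filter.mp a.2).2
  have hcov : ∀ e ∈ G.edgeSet, ∃ v ∈ (C \ S) ∪ N, v ∈ e := by
    have key : ∀ u v : V, G.Adj u v → u ∈ C →
        ∃ w ∈ (C \ S) ∪ N, w ∈ (s(u, v) : Sym2 V) := by
      intro u v huv hu
      by_cases hus : u ∈ S
      · by_cases hvC : v ∈ C
        · refine ⟨v, Finset.mem_union_left _ (Finset.mem_sdiff.mpr ⟨hvC, ?_⟩), by simp⟩
          intro hvS
          exact c.valid huv ((hScol u hus).trans (hScol v hvS).symm)
        · refine ⟨v, Finset.mem_union_right _ ?_, by simp⟩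
          simp only [hS, Finset.mem_image] at hus
          obtain ⟨a, ha, haeq⟩ := hus
          exact Finset.mem_biUnion.mpr ⟨a, ha, by simp [haeq, huv, hvC]⟩
      · exact ⟨u, Finset.mem_union_left _ (Finset.mem_sdiff.mpr ⟨hu, hus⟩), by simp⟩
    intro e he
    induction e using Sym2.ind with
    | _ u v =>
      obtain ⟨w, hw, hwe⟩ := hC _ he
      rw [SimpleGraph.mem_edgeSet] at he
      rcases Sym2.mem_iff.mp hwe with rfl | rfl
      · exact key _ _ he hw
      · obtain ⟨x, hx1, hx2⟩ := key _ _ he.symm hw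
        refine ⟨x, hx1, ?_⟩
        rw [Sym2.eq_swap]
        exact hx2
  have h1 := hmin _ hcov
  have h2 : ((C \ S) ∪ N).card ≤ (C.card - S.card) + N.card := by
    calc ((C \ S) ∪ N).card ≤ (C \ S).card + N.card := Finset.card_union_le _ _
      _ = (C.card - S.card) + N.card := by rw [Finset.card_sdiff_of_subset hSsub]
  have h3 : S.card ≤ C.card := Finset.card_le_card hSsub
  omega

/-- From a minimum vertex cover, a matching saturating the color-`i` part of the
cover, with the other endpoints outside the cover and of the other color. -/
lemma konig_side (G : SimpleGraph V) [DecidableRel G.Adj] (c : G.Coloring (Fin 2))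
    (C : Finset V) (hC : ∀ e ∈ G.edgeSet, ∃ v ∈ C, v ∈ e)
    (hmin : ∀ D : Finset V, (∀ e ∈ G.edgeSet, ∃ v ∈ D, v ∈ e) → C.card ≤ D.card)
    (i : Fin 2) :
    ∃ M : Finset (Sym2 V), ↑M ⊆ G.edgeSet ∧
      M.card = (C.filter (fun v => c v = i)).card ∧
      (∀ e ∈ M, ∃ a b : V, e = s(a, b) ∧ a ∈ C ∧ c a = i ∧ b ∉ C ∧ c b ≠ i) ∧
      ((M : Set (Sym2 V)).Pairwise fun e f => ∀ v : V, v ∈ e → v ∉ f) := by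
  classical
  obtain ⟨f, hfinj, hf⟩ := (Finset.all_card_le_biUnion_card_iff_exists_injective
    (fun a : {x // x ∈ C.filter (fun v => c v = i)} =>
      Finset.univ.filter (fun b => G.Adj a.1 b ∧ b ∉ C))).mp
    (konig_hall G c C hC hmin i)
  have hadj : ∀ a, G.Adj a.1 (f a) := fun a => ((Finset.mem_filter.mp (hf a)).2).1
  have hfC : ∀ a, f a ∉ C := fun a => ((Finset.mem_filter.mp (hf a)).2).2
  have haC : ∀ a : {x // x ∈ C.filter (fun v => c v = i)}, a.1 ∈ C ∧ c a.1 = i :=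
    fun a => Finset.mem_filter.mp a.2
  have hcb : ∀ a, c (f a) ≠ i := fun a h => c.valid (hadj a) ((haC a).2.trans h.symm)
  have hinj : Function.Injective
      (fun a : {x // x ∈ C.filter (fun v => c v = i)} => (s(a.1, f a) : Sym2 V)) := by
    intro a a' h
    simp only [Sym2.eq, Sym2.rel_iff', Prod.mk.injEq, Prod.swap_prod_mk] at h
    rcases h with ⟨h1, h2⟩ | ⟨h1, h2⟩
    · exact Subtype.ext h1
    · exact absurd ((haC a).1) (h1 ▸ hfC a')
  refine ⟨(C.filter (fun v => c v = i)).attach.image (fun a => s(a.1, f a)),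
    ?_, ?_, ?_, ?_⟩
  · intro e he
    simp only [Finset.coe_image, Set.mem_image, Finset.mem_coe] at he
    obtain ⟨a, _, rfl⟩ := he
    exact (hadj a)
  · rw [Finset.card_image_of_injective _ hinj, Finset.card_attach]
  · intro e he
    simp only [Finset.mem_image] at he
    obtain ⟨a, _, rfl⟩ := he
    exact ⟨a.1, f a, rfl, (haC a).1, (haC a).2, hfC a, hcb a⟩
  · intro e he e' he' hne v hv hv'
    simp only [Finset.coe_image, Set.mem_image, Finset.mem_coe] at he he'
    obtain ⟨a, _, rfl⟩ := he
    obtain ⟨a', _, rfl⟩ := he'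
    rcases Sym2.mem_iff.mp hv with rfl | rfl
    · rcases Sym2.mem_iff.mp hv' with h | h
      · exact hne (by rw [Subtype.ext h])
      · exact hfC a' (h ▸ (haC a).1)
    · rcases Sym2.mem_iff.mp hv' with h | h
      · exact hfC a (h ▸ (haC a').1)
      · exact hne (by rw [hfinj h])

end KonigAux

/-- König's theorem: in a finite bipartite graph, the maximum size of a matching
equals the minimum size of a vertex cover. -/
theorem konig_matching_vertexCover {V : Type*} [Fintype V] [DecidableEq V]
    (G : SimpleGraph V) (hbip : G.Colorable 2) :
    sSup {n : ℕ | ∃ M : Finset (Sym2 V), ↑M ⊆ G.edgeSet ∧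
        ((M : Set (Sym2 V)).Pairwise fun e f => ∀ v : V, v ∈ e → v ∉ f) ∧
        M.card = n}
      = sInf {n : ℕ | ∃ S : Finset V, (∀ e ∈ G.edgeSet, ∃ v ∈ S, v ∈ e) ∧
        S.card = n} := by
  classical
  obtain ⟨c⟩ := hbip
  have fin2 : ∀ x : Fin 2, x ≠ 0 → x = 1 := by decide
  have fin2' : ∀ x : Fin 2, (x = 1) = ¬(x = 0) := by decide
  have hne : {n : ℕ | ∃ S : Finset V, (∀ e ∈ G.edgeSet, ∃ v ∈ S, v ∈ e) ∧
      S.card = n}.Nonempty := by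
    refine ⟨Finset.univ.card, Finset.univ, fun e he => ?_, rfl⟩
    induction e using Sym2.ind with
    | _ u v => exact ⟨u, Finset.mem_univ u, by simp⟩
  obtain ⟨C, hCcov, hCcard⟩ := Nat.sInf_mem hne
  have hmin : ∀ D : Finset V, (∀ e ∈ G.edgeSet, ∃ v ∈ D, v ∈ e) → C.card ≤ D.card := by
    intro D hD
    rw [hCcard]
    exact Nat.sInf_le ⟨D, hD, rfl⟩
  obtain ⟨M0, hM0e, hM0c, hM0s, hM0p⟩ := konig_side G c C hCcov hmin 0
  obtain ⟨M1, hM1e, hM1c, hM1s, hM1p⟩ := konig_side G c C hCcov hmin 1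
  have hdisj : ∀ e ∈ M0, ∀ f ∈ M1, ∀ v : V, v ∈ e → v ∉ f := by
    intro e he f hfm v hve hvf
    obtain ⟨a0, b0, rfl, ha0C, ha0c, hb0C, hb0c⟩ := hM0s e he
    obtain ⟨a1, b1, rfl, ha1C, ha1c, hb1C, hb1c⟩ := hM1s f hfm
    rcases Sym2.mem_iff.mp hve with rfl | rfl
    · rcases Sym2.mem_iff.mp hvf with h | h
      · rw [h] at ha0c; rw [ha1c] at ha0c; exact absurd ha0c (by decide)
      · exact hb1C (h ▸ ha0C)
    · rcases Sym2.mem_iff.mp hvf with h | h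
      · exact hb0C (h ▸ ha1C)
      · have h0 : c v = 1 := fin2 _ hb0c
        rw [h] at h0
        exact hb1c h0
  have hMdisj : Disjoint M0 M1 := by
    rw [Finset.disjoint_left]
    intro e he0 he1
    obtain ⟨a0, b0, heq, ha0C, _, _, _⟩ := hM0s e he0
    have : a0 ∈ e := heq ▸ Sym2.mem_mk_left a0 b0
    exact hdisj e he0 e he1 a0 this this
  have hcard : (M0 ∪ M1).card = C.card := by
    rw [Finset.card_union_of_disjoint hMdisj, hM0c, hM1c]
    rw [show (Finset.filter (fun v => c v = 1) C) = Finset.filter (fun v => ¬ c v = 0) C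
      from Finset.filter_congr (fun v _ => iff_of_eq (fin2' _)),
      Finset.card_filter_add_card_filter_not]
  have hMmem : (M0 ∪ M1).card ∈ {n : ℕ | ∃ M : Finset (Sym2 V), ↑M ⊆ G.edgeSet ∧
      ((M : Set (Sym2 V)).Pairwise fun e f => ∀ v : V, v ∈ e → v ∉ f) ∧
      M.card = n} := by
    refine ⟨M0 ∪ M1, ?_, ?_, rfl⟩
    · rw [Finset.coe_union]
      exact Set.union_subset hM0e hM1e
    · intro e he f hfm hne' v hve hvf
      rw [Finset.coe_union, Set.mem_union] at he hfm
      rcases he with he | he <;> rcases hfm with hfm | hfm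
      · exact hM0p he hfm hne' v hve hvf
      · exact hdisj e he f hfm v hve hvf
      · exact hdisj f hfm e he v hvf hve
      · exact hM1p he hfm hne' v hve hvf
  have hub : ∀ n ∈ {n : ℕ | ∃ M : Finset (Sym2 V), ↑M ⊆ G.edgeSet ∧
      ((M : Set (Sym2 V)).Pairwise fun e f => ∀ v : V, v ∈ e → v ∉ f) ∧
      M.card = n}, n ≤ C.card := by
    rintro n ⟨M, hMe, hMp, rfl⟩
    exact konig_easy G M hMe hMp C hCcov
  rw [← hCcard]
  apply le_antisymm
  · exact csSup_le ⟨(M0 ∪ M1).card, hMmem⟩ hub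
  · rw [← hcard]
    exact le_csSup ⟨C.card, hub⟩ hMmem
end

section
/- For any weighted bipartite graph, the maximum weight of a matching equals the minimum of ∑ y_v over all nonnegative vertex weight assignments y satisfying y_i + y_j ≥ w_{ij} for every edge (i,j) (LP duality for bipartite weighted matching, with integral optima when weights are integral). -/
open Finset

lemma bwmd_weak {V : Type*} [Fintype V] [DecidableEq V] (G : SimpleGraph V) (w : Sym2 V → ℕ)
    (M : Finset (Sym2 V)) (hM : ↑M ⊆ G.edgeSet)
    (hMm : (M : Set (Sym2 V)).Pairwise fun e f => ∀ v : V, v ∈ e → v ∉ f)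
    (y : V → ℕ) (hy : ∀ i j : V, G.Adj i j → w s(i, j) ≤ y i + y j) :
    ∑ e ∈ M, w e ≤ ∑ v, y v := by
  classical
  set vf : Sym2 V → Finset V := fun e => univ.filter (· ∈ e) with hvf
  have key : ∀ e ∈ M, w e ≤ ∑ v ∈ vf e, y v := by
    intro e he
    induction e using Sym2.ind with
    | _ i j =>
      have hadj : G.Adj i j := (SimpleGraph.mem_edgeSet G).mp (hM he)
      have hij : i ≠ j := hadj.ne
      have : vf s(i,j) = {i, j} := by
        ext v; simp [hvf, Sym2.mem_iff]
      rw [this, Finset.sum_pair hij]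
      exact hy i j hadj
  calc ∑ e ∈ M, w e ≤ ∑ e ∈ M, ∑ v ∈ vf e, y v := Finset.sum_le_sum key
    _ = ∑ v ∈ M.biUnion vf, y v := by
        rw [Finset.sum_biUnion]
        intro e he f hf hef
        simp only [Finset.disjoint_left]
        intro v hv hv'
        simp only [hvf, mem_filter] at hv hv'
        exact hMm he hf hef v hv.2 hv'.2
    _ ≤ ∑ v, y v := Finset.sum_le_sum_of_subset (Finset.subset_univ _)
open Finset

lemma bwmd_hall {V : Type*} [Fintype V] [DecidableEq V] (G : SimpleGraph V) (w : Sym2 V → ℕ)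
    (A : Set V) (hcross : ∀ i j : V, G.Adj i j → (i ∈ A ↔ j ∉ A))
    (y : V → ℕ) (hy : ∀ i j : V, G.Adj i j → w s(i, j) ≤ y i + y j)
    (hmin : ∀ y' : V → ℕ, (∀ i j : V, G.Adj i j → w s(i, j) ≤ y' i + y' j) →
      ∑ v, y v ≤ ∑ v, y' v) :
    ∃ f : {a : V // a ∈ A ∧ 0 < y a} → V, Function.Injective f ∧
      ∀ a : {a : V // a ∈ A ∧ 0 < y a}, G.Adj a.1 (f a) ∧ w s(a.1, f a) = y a.1 + y (f a) ∧ (f a) ∉ A := by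
  classical
  set t : {a : V // a ∈ A ∧ 0 < y a} → Finset V := fun a =>
    univ.filter (fun b => G.Adj a.1 b ∧ w s(a.1, b) = y a.1 + y b ∧ b ∉ A) with ht
  have hall : ∀ s : Finset {a : V // a ∈ A ∧ 0 < y a}, s.card ≤ (s.biUnion t).card := by
    by_contra hc
    push_neg at hc
    obtain ⟨s, hs⟩ := hc
    set S : Finset V := s.image Subtype.val with hS
    set N : Finset V := s.biUnion t with hN
    have hScard : S.card = s.card := Finset.card_image_of_injective _ Subtype.val_injective
    have hSA : ∀ v ∈ S, v ∈ A ∧ 0 < y v := by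
      intro v hv; simp only [hS, mem_image] at hv
      obtain ⟨a, _, rfl⟩ := hv; exact a.2
    have hNA : ∀ v ∈ N, v ∉ A := by
      intro v hv; simp only [hN, mem_biUnion, ht, mem_filter] at hv
      obtain ⟨a, _, _, _, _, h⟩ := hv; exact h
    have hSN : ∀ v, v ∈ S → v ∉ N := fun v hv hn => hNA v hn (hSA v hv).1
    -- tightness transfer: if i ∈ S and edge (i,j) tight with j ∉ A then j ∈ N
    have htight : ∀ i j : V, i ∈ S → G.Adj i j → j ∉ A → w s(i, j) = y i + y j → j ∈ N := by
      intro i j hiS hadj hjA htt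
      simp only [hS, mem_image] at hiS
      obtain ⟨a, ha, rfl⟩ := hiS
      simp only [hN, mem_biUnion]
      exact ⟨a, ha, by simp [ht, hadj, htt, hjA]⟩
    set y' : V → ℕ := fun v => if v ∈ S then y v - 1 else if v ∈ N then y v + 1 else y v
      with hy'
    have feas : ∀ i j : V, G.Adj i j → w s(i, j) ≤ y' i + y' j := by
      intro i j hadj
      have hbase := hy i j hadj
      by_cases hiS : i ∈ S <;> by_cases hjS : j ∈ S
      · exact absurd ((hcross i j hadj).mp (hSA i hiS).1) (not_not_intro (hSA j hjS).1)
      · have hjA : j ∉ A := (hcross i j hadj).mp (hSA i hiS).1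
        have hi1 := (hSA i hiS).2
        by_cases hjN : j ∈ N
        · simp only [hy', if_pos hiS, if_neg hjS, if_pos hjN]; omega
        · have : w s(i, j) ≠ y i + y j := fun h => hjN (htight i j hiS hadj hjA h)
          simp only [hy', if_pos hiS, if_neg hjS, if_neg hjN]; omega
      · have hiA : i ∉ A := fun h => (hcross i j hadj).mp h (hSA j hjS).1
        have hj1 := (hSA j hjS).2
        have hsymm : w s(j, i) = w s(i, j) := by rw [Sym2.eq_swap]
        by_cases hiN : i ∈ N
        · simp only [hy', if_neg hiS, if_pos hjS, if_pos hiN]; omega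
        · have : w s(i, j) ≠ y i + y j := fun h => hiN
            (htight j i hjS hadj.symm hiA (by rw [hsymm]; omega))
          simp only [hy', if_neg hiS, if_pos hjS, if_neg hiN]; omega
      · have h1 : y i ≤ y' i := by simp only [hy', if_neg hiS]; split_ifs <;> omega
        have h2 : y j ≤ y' j := by simp only [hy', if_neg hjS]; split_ifs <;> omega
        omega
    have hsum : ∑ v, y' v + S.card = ∑ v, y v + N.card := by
      have hptw : ∀ v : V, y' v + (if v ∈ S then 1 else 0)
          = y v + (if v ∈ N then 1 else 0) := by
        intro v
        by_cases hvS : v ∈ S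
        · have := (hSA v hvS).2
          have := hSN v hvS
          simp only [hy', hvS, if_pos, if_neg this]; omega
        · by_cases hvN : v ∈ N <;> simp [hy', hvS, hvN]
      calc ∑ v, y' v + S.card
          = ∑ v : V, (y' v + if v ∈ S then 1 else 0) := by
            rw [Finset.sum_add_distrib, Finset.sum_ite_mem, Finset.univ_inter,
              Finset.sum_const, smul_eq_mul, mul_one]
        _ = ∑ v : V, (y v + if v ∈ N then 1 else 0) := by
            exact Finset.sum_congr rfl fun v _ => hptw v
        _ = ∑ v, y v + N.card := by
            rw [Finset.sum_add_distrib, Finset.sum_ite_mem, Finset.univ_inter,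
              Finset.sum_const, smul_eq_mul, mul_one]
    have := hmin y' feas
    rw [hScard] at hsum
    omega
  obtain ⟨f, hinj, hf⟩ := (Finset.all_card_le_biUnion_card_iff_exists_injective t).mp hall
  refine ⟨f, hinj, fun a => ?_⟩
  have := hf a
  simp only [ht, mem_filter] at this
  exact ⟨this.2.1, this.2.2.1, this.2.2.2⟩
open Finset

lemma bwmd_strong {V : Type*} [Fintype V] [DecidableEq V] (G : SimpleGraph V)
    (hbip : G.Colorable 2) (w : Sym2 V → ℕ) (y : V → ℕ)
    (hy : ∀ i j : V, G.Adj i j → w s(i, j) ≤ y i + y j)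
    (hmin : ∀ y' : V → ℕ, (∀ i j : V, G.Adj i j → w s(i, j) ≤ y' i + y' j) →
      ∑ v, y v ≤ ∑ v, y' v) :
    ∃ M : Finset (Sym2 V), ↑M ⊆ G.edgeSet ∧
      ((M : Set (Sym2 V)).Pairwise fun e f => ∀ v : V, v ∈ e → v ∉ f) ∧
      ∑ e ∈ M, w e = ∑ v, y v := by
  classical
  obtain ⟨c⟩ := hbip
  set A : Set V := {v | c v = 0} with hA
  have hcross : ∀ i j : V, G.Adj i j → (i ∈ A ↔ j ∉ A) := by
    intro i j hadj
    have hne := c.valid hadj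
    have h1 : (c i : ℕ) < 2 := (c i).2
    have h2 : (c j : ℕ) < 2 := (c j).2
    have h3 : (c i : ℕ) ≠ (c j : ℕ) := fun h => hne (Fin.ext h)
    simp only [hA, Set.mem_setOf_eq, Fin.ext_iff, Fin.val_zero]
    omega
  have hcross' : ∀ i j : V, G.Adj i j → (i ∈ Aᶜ ↔ j ∉ Aᶜ) := by
    intro i j hadj
    have := hcross i j hadj
    simp only [Set.mem_compl_iff]
    tauto
  obtain ⟨f, hfinj, hf⟩ := bwmd_hall G w A hcross y hy hmin
  obtain ⟨g, hginj, hg⟩ := bwmd_hall G w Aᶜ hcross' y hy hmin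
  set X : Set V := {v | v ∈ A ∧ 0 < y v} with hX
  set Y : Set V := {v | v ∈ Aᶜ ∧ 0 < y v} with hY
  set F : V → V := fun v => if h : v ∈ A ∧ 0 < y v then f ⟨v, h⟩ else v with hF
  set Gf : V → V := fun v => if h : v ∈ Aᶜ ∧ 0 < y v then g ⟨v, h⟩ else v with hGf
  have hFp : ∀ a, a ∈ X → G.Adj a (F a) ∧ w s(a, F a) = y a + y (F a) ∧ F a ∉ A := by
    intro a ha
    have ha' : a ∈ A ∧ 0 < y a := ha
    simp only [hF, dif_pos ha']
    exact hf ⟨a, ha'⟩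
  have hGp : ∀ b, b ∈ Y → G.Adj b (Gf b) ∧ w s(b, Gf b) = y b + y (Gf b) ∧ Gf b ∈ A := by
    intro b hb
    have hb' : b ∈ Aᶜ ∧ 0 < y b := hb
    simp only [hGf, dif_pos hb']
    have := hg ⟨b, hb'⟩
    exact ⟨this.1, this.2.1, not_not.mp this.2.2⟩
  have hFinj : Set.InjOn F X := by
    intro a ha b hb hab
    have ha' : a ∈ A ∧ 0 < y a := ha
    have hb' : b ∈ A ∧ 0 < y b := hb
    simp only [hF, dif_pos ha', dif_pos hb'] at hab
    exact congrArg Subtype.val (hfinj hab)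
  have hGinj : Set.InjOn Gf Y := by
    intro a ha b hb hab
    have ha' : a ∈ Aᶜ ∧ 0 < y a := ha
    have hb' : b ∈ Aᶜ ∧ 0 < y b := hb
    simp only [hGf, dif_pos ha', dif_pos hb'] at hab
    exact congrArg Subtype.val (hginj hab)
  -- Knaster–Tarski fixed point (Mendelsohn–Dulmage style)
  set Psi : Set V →o Set V := ⟨fun S => X \ (Gf '' (Y \ F '' S)), by
    intro S S' hss
    exact Set.diff_subset_diff_right
      (Set.image_mono (Set.diff_subset_diff_right (Set.image_mono hss)))⟩ with hPsi
  set X' : Set V := OrderHom.lfp Psi with hX'def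
  set Y' : Set V := Y \ F '' X' with hY'def
  have hfix : X \ (Gf '' Y') = X' := Psi.map_lfp
  have hX'X : X' ⊆ X := by rw [← hfix]; exact Set.diff_subset
  have hY'Y : Y' ⊆ Y := Set.diff_subset
  have hX'G : ∀ a ∈ X', a ∉ Gf '' Y' := by
    intro a ha
    rw [← hfix] at ha
    exact ha.2
  have hXcov : ∀ a ∈ X, a ∉ X' → a ∈ Gf '' Y' := by
    intro a ha h
    by_contra hc
    exact h (hfix ▸ (⟨ha, hc⟩ : a ∈ X \ (Gf '' Y')))
  have hcrossE : ∀ a ∈ X', ∀ b ∈ Y', a ≠ Gf b ∧ F a ≠ b := by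
    intro a ha b hb
    refine ⟨fun h => hX'G a ha ⟨b, hb, h.symm⟩, fun h => hb.2 ⟨a, ha, h⟩⟩
  -- side membership facts
  have hXA : ∀ a ∈ X', a ∈ A := fun a ha => (hX'X ha).1
  have hYA : ∀ b ∈ Y', b ∉ A := fun b hb => (hY'Y hb).1
  have hFA : ∀ a ∈ X', F a ∉ A := fun a ha => (hFp a (hX'X ha)).2.2
  have hGA : ∀ b ∈ Y', Gf b ∈ A := fun b hb => (hGp b (hY'Y hb)).2.2
  set X'f : Finset V := univ.filter (· ∈ X') with hX'f
  set Y'f : Finset V := univ.filter (· ∈ Y') with hY'f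
  have hmX : ∀ a, a ∈ X'f ↔ a ∈ X' := by intro a; simp [hX'f]
  have hmY : ∀ b, b ∈ Y'f ↔ b ∈ Y' := by intro b; simp [hY'f]
  set M : Finset (Sym2 V) :=
    X'f.image (fun a => s(a, F a)) ∪ Y'f.image (fun b => s(Gf b, b)) with hM
  have hmemM : ∀ e ∈ M, (∃ a ∈ X', e = s(a, F a)) ∨ (∃ b ∈ Y', e = s(Gf b, b)) := by
    intro e he
    simp only [hM, mem_union, mem_image] at he
    rcases he with ⟨a, ha, rfl⟩ | ⟨b, hb, rfl⟩
    · exact Or.inl ⟨a, (hmX a).mp ha, rfl⟩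
    · exact Or.inr ⟨b, (hmY b).mp hb, rfl⟩
  refine ⟨M, ?_, ?_, ?_⟩
  · -- edges
    intro e he
    rcases hmemM e he with ⟨a, ha, rfl⟩ | ⟨b, hb, rfl⟩
    · exact (hFp a (hX'X ha)).1
    · exact ((hGp b (hY'Y hb)).1).symm
  · -- matching
    intro e he e' he' hne v hv hv'
    rcases hmemM e he with ⟨a, ha, rfl⟩ | ⟨b, hb, rfl⟩ <;>
      rcases hmemM e' he' with ⟨a', ha', rfl⟩ | ⟨b', hb', rfl⟩ <;>
      rw [Sym2.mem_iff] at hv hv' <;>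
      rcases hv with h1 | h1 <;> rcases hv' with h2 | h2 <;>
      (try replace h2 := h1.symm.trans h2)
    · exact hne (by rw [h2])
    · exact (hFA a' ha') (h2 ▸ hXA a ha)
    · exact (hFA a ha) (h2 ▸ hXA a' ha')
    · exact hne (by rw [hFinj (hX'X ha) (hX'X ha') h2])
    · exact (hcrossE a ha b' hb').1 h2
    · exact (hYA b' hb') (h2 ▸ hXA a ha)
    · exact (hFA a ha) (h2 ▸ hGA b' hb')
    · exact (hcrossE a ha b' hb').2 h2
    · exact (hcrossE a' ha' b hb).1 h2.symm
    · exact (hFA a' ha') (h2.symm ▸ hGA b hb)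
    · exact (hYA b hb) (h2 ▸ hXA a' ha')
    · exact (hcrossE a' ha' b hb).2 h2.symm
    · exact hne (by rw [hGinj (hY'Y hb) (hY'Y hb') h2])
    · exact (hYA b' hb') (h2 ▸ hGA b hb)
    · exact (hYA b hb) (by rw [h2]; exact hGA b' hb')
    · exact hne (by rw [h2])
  · -- weight computation
    have hdisjM : Disjoint (X'f.image (fun a => s(a, F a))) (Y'f.image (fun b => s(Gf b, b))) := by
      rw [Finset.disjoint_left]
      intro e h1 h2
      simp only [mem_image] at h1 h2
      obtain ⟨a, ha, rfl⟩ := h1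
      obtain ⟨b, hb, heq⟩ := h2
      replace ha := (hmX a).mp ha
      replace hb := (hmY b).mp hb
      rw [Sym2.eq_iff] at heq
      rcases heq with ⟨hq1, hq2⟩ | ⟨hq1, hq2⟩
      · exact (hcrossE a ha b hb).1 hq1.symm
      · exact (hYA b hb) (by rw [hq2]; exact hXA a ha)
    have hinj1 : ∀ x ∈ X'f, ∀ z ∈ X'f, s(x, F x) = s(z, F z) → x = z := by
      intro x hx z hz h
      rw [Sym2.eq_iff] at h
      rcases h with ⟨h1, _⟩ | ⟨h1, _⟩
      · exact h1
      · exact absurd (hXA x ((hmX x).mp hx)) (by rw [h1]; exact hFA z ((hmX z).mp hz))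
    have hinj2 : ∀ x ∈ Y'f, ∀ z ∈ Y'f, s(Gf x, x) = s(Gf z, z) → x = z := by
      intro x hx z hz h
      rw [Sym2.eq_iff] at h
      rcases h with ⟨_, h2⟩ | ⟨h1, _⟩
      · exact h2
      · exact absurd (hGA x ((hmY x).mp hx)) (by rw [h1]; exact hYA z ((hmY z).mp hz))
    have ht1 : ∑ a ∈ X'f, w s(a, F a) = ∑ a ∈ X'f, (y a + y (F a)) :=
      Finset.sum_congr rfl fun a ha => (hFp a (hX'X ((hmX a).mp ha))).2.1
    have ht2 : ∑ b ∈ Y'f, w s(Gf b, b) = ∑ b ∈ Y'f, (y (Gf b) + y b) := by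
      refine Finset.sum_congr rfl fun b hb => ?_
      rw [Sym2.eq_swap, (hGp b (hY'Y ((hmY b).mp hb))).2.1]
      omega
    have hwsum : ∑ e ∈ M, w e
        = (∑ a ∈ X'f, y a + ∑ a ∈ X'f, y (F a))
          + (∑ b ∈ Y'f, y (Gf b) + ∑ b ∈ Y'f, y b) := by
      rw [hM, Finset.sum_union hdisjM, Finset.sum_image hinj1, Finset.sum_image hinj2,
        ht1, ht2, Finset.sum_add_distrib, Finset.sum_add_distrib]
    set Xf : Finset V := univ.filter (· ∈ X) with hXf
    set Yf : Finset V := univ.filter (· ∈ Y) with hYf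
    have hmXf : ∀ v, v ∈ Xf ↔ v ∈ X := by intro v; simp [hXf]
    have hmYf : ∀ v, v ∈ Yf ↔ v ∈ Y := by intro v; simp [hYf]
    have e1 : ∑ a ∈ X'f, y (F a) = ∑ v ∈ (X'f.image F) ∩ Yf, y v := by
      rw [← Finset.sum_image (fun x hx z hz h =>
        hFinj (hX'X ((hmX x).mp hx)) (hX'X ((hmX z).mp hz)) h)]
      refine (Finset.sum_subset Finset.inter_subset_left ?_).symm
      intro v hv hv2
      by_contra h0
      obtain ⟨a, ha, rfl⟩ := Finset.mem_image.mp hv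
      exact hv2 (Finset.mem_inter.mpr ⟨hv,
        (hmYf _).mpr ⟨hFA a ((hmX a).mp ha), Nat.pos_of_ne_zero h0⟩⟩)
    have e2 : ∑ b ∈ Y'f, y (Gf b) = ∑ v ∈ (Y'f.image Gf) ∩ Xf, y v := by
      rw [← Finset.sum_image (fun x hx z hz h =>
        hGinj (hY'Y ((hmY x).mp hx)) (hY'Y ((hmY z).mp hz)) h)]
      refine (Finset.sum_subset Finset.inter_subset_left ?_).symm
      intro v hv hv2
      by_contra h0
      obtain ⟨b, hb, rfl⟩ := Finset.mem_image.mp hv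
      exact hv2 (Finset.mem_inter.mpr ⟨hv,
        (hmXf _).mpr ⟨hGA b ((hmY b).mp hb), Nat.pos_of_ne_zero h0⟩⟩)
    have hdx : Disjoint X'f ((Y'f.image Gf) ∩ Xf) := by
      rw [Finset.disjoint_left]
      intro v hv hv2
      obtain ⟨hvi, _⟩ := Finset.mem_inter.mp hv2
      obtain ⟨b, hb, rfl⟩ := Finset.mem_image.mp hvi
      exact hX'G _ ((hmX _).mp hv) ⟨b, (hmY b).mp hb, rfl⟩
    have hdy : Disjoint Y'f ((X'f.image F) ∩ Yf) := by
      rw [Finset.disjoint_left]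
      intro v hv hv2
      obtain ⟨hvi, _⟩ := Finset.mem_inter.mp hv2
      obtain ⟨a, ha, rfl⟩ := Finset.mem_image.mp hvi
      exact ((hmY _).mp hv).2 ⟨a, (hmX a).mp ha, rfl⟩
    have e3 : ∑ v ∈ Xf, y v = ∑ v ∈ X'f, y v + ∑ v ∈ (Y'f.image Gf) ∩ Xf, y v := by
      rw [← Finset.sum_union hdx]
      refine Finset.sum_congr ?_ (fun _ _ => rfl)
      ext v
      rw [Finset.mem_union, Finset.mem_inter, hmXf, hmX]
      constructor
      · intro hvX
        by_cases hv' : v ∈ X'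
        · exact Or.inl hv'
        · obtain ⟨b, hb, rfl⟩ := hXcov v hvX hv'
          exact Or.inr ⟨Finset.mem_image.mpr ⟨b, (hmY b).mpr hb, rfl⟩, hvX⟩
      · rintro (h | ⟨_, h⟩)
        · exact hX'X h
        · exact h
    have e4 : ∑ v ∈ Yf, y v = ∑ v ∈ Y'f, y v + ∑ v ∈ (X'f.image F) ∩ Yf, y v := by
      rw [← Finset.sum_union hdy]
      refine Finset.sum_congr ?_ (fun _ _ => rfl)
      ext v
      rw [Finset.mem_union, Finset.mem_inter, hmYf, hmY]
      constructor
      · intro hvY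
        by_cases hv' : v ∈ F '' X'
        · obtain ⟨a, ha, rfl⟩ := hv'
          exact Or.inr ⟨Finset.mem_image.mpr ⟨a, (hmX a).mpr ha, rfl⟩, hvY⟩
        · exact Or.inl ⟨hvY, hv'⟩
      · rintro (h | ⟨_, h⟩)
        · exact hY'Y h
        · exact h
    have hdXY : Disjoint Xf Yf := by
      rw [Finset.disjoint_left]
      intro v hv hv2
      exact ((hmYf v).mp hv2).1 ((hmXf v).mp hv).1
    have e5 : ∑ v ∈ Xf, y v + ∑ v ∈ Yf, y v = ∑ v, y v := by
      rw [← Finset.sum_union hdXY]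
      refine Finset.sum_subset (Finset.subset_univ _) ?_
      intro v _ hv
      by_contra h0
      have hp : 0 < y v := Nat.pos_of_ne_zero h0
      rcases em (v ∈ A) with hvA | hvA
      · exact hv (Finset.mem_union.mpr (Or.inl ((hmXf v).mpr ⟨hvA, hp⟩)))
      · exact hv (Finset.mem_union.mpr (Or.inr ((hmYf v).mpr ⟨hvA, hp⟩)))
    omega

/-- LP duality for bipartite maximum weight matching with nonnegative integral
weights: the maximum weight of a matching equals the minimum of `∑ y v` over
all nonnegative integral dual feasible vertex weight assignments `y`. -/
theorem bipartite_weighted_matching_duality {V : Type*} [Fintype V] [DecidableEq V]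
    (G : SimpleGraph V) (hbip : G.Colorable 2) (w : Sym2 V → ℕ) :
    sSup {k : ℕ | ∃ M : Finset (Sym2 V), ↑M ⊆ G.edgeSet ∧
        ((M : Set (Sym2 V)).Pairwise fun e f => ∀ v : V, v ∈ e → v ∉ f) ∧
        ∑ e ∈ M, w e = k}
      = sInf {k : ℕ | ∃ y : V → ℕ, (∀ i j : V, G.Adj i j → w s(i, j) ≤ y i + y j) ∧
        ∑ v, y v = k} := by
  classical
  set D : Set ℕ := {k : ℕ | ∃ y : V → ℕ,
    (∀ i j : V, G.Adj i j → w s(i, j) ≤ y i + y j) ∧ ∑ v, y v = k} with hD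
  have hD0 : D.Nonempty := by
    refine ⟨∑ _v : V, Finset.univ.sup w, fun _ => Finset.univ.sup w, fun i j _ => ?_, rfl⟩
    exact le_trans (Finset.le_sup (Finset.mem_univ _)) (Nat.le_add_right _ _)
  obtain ⟨y, hyfeas, hysum⟩ := Nat.sInf_mem hD0
  have hmin : ∀ y' : V → ℕ, (∀ i j : V, G.Adj i j → w s(i, j) ≤ y' i + y' j) →
      ∑ v, y v ≤ ∑ v, y' v := fun y' h => hysum ▸ Nat.sInf_le ⟨y', h, rfl⟩
  obtain ⟨M, hM1, hM2, hM3⟩ := bwmd_strong G hbip w y hyfeas hmin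
  have hPin : sInf D ∈ {k : ℕ | ∃ M : Finset (Sym2 V), ↑M ⊆ G.edgeSet ∧
      ((M : Set (Sym2 V)).Pairwise fun e f => ∀ v : V, v ∈ e → v ∉ f) ∧
      ∑ e ∈ M, w e = k} := ⟨M, hM1, hM2, hM3.trans hysum⟩
  have hub : ∀ k ∈ {k : ℕ | ∃ M : Finset (Sym2 V), ↑M ⊆ G.edgeSet ∧
      ((M : Set (Sym2 V)).Pairwise fun e f => ∀ v : V, v ∈ e → v ∉ f) ∧
      ∑ e ∈ M, w e = k}, k ≤ sInf D := by
    rintro k ⟨M', h1, h2, rfl⟩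
    rw [← hysum]
    exact bwmd_weak G w M' h1 h2 y hyfeas
  exact le_antisymm (csSup_le ⟨_, hPin⟩ hub) (le_csSup ⟨sInf D, hub⟩ hPin)
end

section
/- In a complete weighted graph whose weights satisfy the triangle inequality, for any even subset O of vertices, the minimum weight of a perfect matching on O is at most half the weight of a minimum-cost Hamiltonian cycle on the full vertex set. -/
/-- `M` is a perfect matching on the vertex set `O` in the complete graph:
a set of pairwise disjoint non-loop edges whose endpoints are exactly `O`. -/
def IsPerfectMatchingOn {V : Type*} (M : Finset (Sym2 V)) (O : Finset V) : Prop :=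
  (↑M ⊆ (⊤ : SimpleGraph V).edgeSet) ∧
    ((M : Set (Sym2 V)).Pairwise fun e f => ∀ v : V, v ∈ e → v ∉ f) ∧
    (∀ v : V, v ∈ O ↔ ∃ e ∈ M, v ∈ e)

namespace TSPAux

variable {V : Type*}

/-- weight of a path given by its list of vertices -/
def pathW (w : Sym2 V → ℝ) : List V → ℝ
  | [] => 0
  | [_] => 0
  | a :: b :: l => w s(a, b) + pathW w (b :: l)

/-- pair up a list of vertices into consecutive chunks of two -/
def pairs1 : List V → List (Sym2 V)
  | a :: b :: l => s(a, b) :: pairs1 l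
  | _ => []

lemma w_nonneg {w : Sym2 V → ℝ}
    (htri : ∀ u v x : V, w s(u, v) ≤ w s(u, x) + w s(x, v)) :
    ∀ e : Sym2 V, 0 ≤ w e := by
  intro e
  induction e using Sym2.ind with
  | _ a b =>
    have h1 := htri a a a
    have h2 := htri a a b
    rw [show s(b, a) = s(a, b) from Sym2.eq_swap] at h2
    linarith

lemma pathW_nonneg {w : Sym2 V → ℝ}
    (htri : ∀ u v x : V, w s(u, v) ≤ w s(u, x) + w s(x, v)) :
    ∀ l : List V, 0 ≤ pathW w l
  | [] => by simp [pathW]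
  | [a] => by simp [pathW]
  | a :: b :: l => by
    have h1 := pathW_nonneg htri (b :: l)
    have h2 := w_nonneg htri s(a, b)
    simp only [pathW]
    linarith

lemma pathW_sublist {w : Sym2 V → ℝ}
    (htri : ∀ u v x : V, w s(u, v) ≤ w s(u, x) + w s(x, v))
    {s t : List V} (h : List.Sublist s t) : ∀ a : V, pathW w (a :: s) ≤ pathW w (a :: t) := by
  induction h with
  | slnil => intro a; exact le_refl _
  | @cons s t x h ih =>
    intro a
    have h1 := ih x
    cases s with
    | nil =>
      have := pathW_nonneg htri (x :: t)
      have := w_nonneg htri s(a, x)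
      simp only [pathW]
      linarith
    | cons y s' =>
      have htr := htri a y x
      simp only [pathW] at h1 ⊢
      linarith
  | @cons_cons s t x h ih =>
    intro a
    have h1 := ih x
    simp only [pathW]
    linarith

lemma pairW (w : Sym2 V → ℝ) :
    ∀ (m : List V), Even m.length → ∀ z : V,
      pathW w (m ++ [z]) =
        ((pairs1 m).map w).sum + ((pairs1 (m.tail ++ [z])).map w).sum
  | [], _, z => by simp [pathW, pairs1]
  | [a], h, z => by simp at h
  | [a, b], _, z => by simp [pathW, pairs1]
  | a :: b :: c :: m'', h, z => by
    have h' : Even (c :: m'').length := by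
      rcases h with ⟨k, hk⟩
      simp only [List.length_cons] at hk ⊢
      exact ⟨k - 1, by omega⟩
    have ih := pairW w (c :: m'') h' z
    simp only [List.cons_append, List.append_eq, pathW, pairs1, List.map_cons,
      List.sum_cons, List.tail_cons] at ih ⊢
    linarith

lemma mem_pairs1 : ∀ (l : List V), Even l.length → ∀ v : V,
    (∃ e ∈ pairs1 l, v ∈ e) ↔ v ∈ l
  | [], _, v => by simp [pairs1]
  | [a], h, v => by simp at h
  | a :: b :: l, h, v => by
    have h' : Even l.length := by
      rcases h with ⟨k, hk⟩
      simp only [List.length_cons] at hk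
      exact ⟨k - 1, by omega⟩
    have ih := mem_pairs1 l h' v
    simp only [pairs1, List.mem_cons, Sym2.mem_iff]
    constructor
    · rintro ⟨e, he | he, hv⟩
      · subst he; rcases Sym2.mem_iff.1 hv with h | h <;> simp [h]
      · have := ih.1 ⟨e, he, hv⟩; tauto
    · rintro (rfl | rfl | hv)
      · exact ⟨s(v, b), Or.inl rfl, by simp⟩
      · exact ⟨s(a, v), Or.inl rfl, by simp⟩
      · rcases ih.2 hv with ⟨e, he, hve⟩; exact ⟨e, Or.inr he, hve⟩

lemma pairs1_vertex_mem : ∀ (l : List V) (e : Sym2 V), e ∈ pairs1 l → ∀ v : V, v ∈ e → v ∈ l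
  | [], e, he, v, hv => by simp [pairs1] at he
  | [a], e, he, v, hv => by simp [pairs1] at he
  | a :: b :: l, e, he, v, hv => by
    simp only [pairs1, List.mem_cons] at he
    rcases he with rfl | he
    · rcases Sym2.mem_iff.1 hv with rfl | rfl <;> simp
    · have := pairs1_vertex_mem l e he v hv
      simp [this]

lemma pairs1_pairwise : ∀ (l : List V), l.Nodup →
    (pairs1 l).Pairwise fun e f => ∀ v : V, v ∈ e → v ∉ f
  | [], _ => by simp [pairs1]
  | [a], _ => by simp [pairs1]
  | a :: b :: l, hnd => by
    simp only [List.nodup_cons, List.mem_cons] at hnd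
    refine List.Pairwise.cons ?_ (pairs1_pairwise l hnd.2.2)
    intro f hf v hv
    intro hvf
    have hvl := pairs1_vertex_mem l f hf v hvf
    rcases Sym2.mem_iff.1 hv with rfl | rfl
    · exact hnd.1 (Or.inr hvl)
    · exact hnd.2.1 hvl

lemma pairs1_nodup : ∀ (l : List V), l.Nodup → (pairs1 l).Nodup
  | [], _ => by simp [pairs1]
  | [a], _ => by simp [pairs1]
  | a :: b :: l, hnd => by
    simp only [List.nodup_cons, List.mem_cons] at hnd
    refine List.Nodup.cons ?_ (pairs1_nodup l hnd.2.2)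
    intro hmem
    exact hnd.1 (Or.inr (pairs1_vertex_mem l _ hmem a (by simp)))

lemma pairs1_not_diag : ∀ (l : List V), l.Nodup → ∀ e ∈ pairs1 l, ¬ e.IsDiag
  | [], _ => by simp [pairs1]
  | [a], _ => by simp [pairs1]
  | a :: b :: l, hnd => by
    simp only [List.nodup_cons, List.mem_cons] at hnd
    intro e he
    simp only [pairs1, List.mem_cons] at he
    rcases he with rfl | he
    · simp only [Sym2.isDiag_iff_proj_eq]
      intro hab; exact hnd.1 (Or.inl hab)
    · exact pairs1_not_diag l hnd.2.2 e he

lemma pairs1_matching [DecidableEq V] (l : List V) (hnd : l.Nodup) (hev : Even l.length) :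
    IsPerfectMatchingOn (pairs1 l).toFinset l.toFinset := by
  refine ⟨?_, ?_, ?_⟩
  · intro e he
    simp only [Finset.coe_sort_coe, Finset.mem_coe, List.mem_toFinset] at he
    have := pairs1_not_diag l hnd e he
    simpa [SimpleGraph.edgeSet_top] using this
  · intro e he f hf hef
    simp only [Finset.coe_sort_coe, Finset.mem_coe, List.mem_toFinset] at he hf
    have hsymm : Symmetric (fun e f : Sym2 V => ∀ v : V, v ∈ e → v ∉ f) :=
      fun e f h v hvf hve => h v hve hvf
    haveI : Std.Symm (fun e f : Sym2 V => ∀ v : V, v ∈ e → v ∉ f) := ⟨fun a b h => hsymm h⟩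
    exact (pairs1_pairwise l hnd).forall he hf hef
  · intro v
    rw [List.mem_toFinset, ← mem_pairs1 l hev v]
    simp

lemma walk_pathW (w : Sym2 V → ℝ) {G : SimpleGraph V} :
    ∀ {u x : V} (p : G.Walk u x), (p.edges.map w).sum = pathW w p.support := by
  intro u x p
  induction p with
  | nil => simp [pathW]
  | @cons u y x h p ih =>
    rw [SimpleGraph.Walk.support_cons, SimpleGraph.Walk.edges_cons]
    rw [SimpleGraph.Walk.support_eq_cons p] at ih ⊢
    simp only [List.map_cons, List.sum_cons, pathW]
    rw [ih]

end TSPAux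

open TSPAux in
/-- In a complete weighted graph whose edge weights satisfy the triangle
inequality, for any even subset `O` of vertices, the minimum weight of a
perfect matching on `O` is at most half the weight of any (in particular, a
minimum-cost) Hamiltonian cycle on the full vertex set. -/
theorem min_matching_le_half_tsp {V : Type*} [Fintype V] [DecidableEq V]
    (w : Sym2 V → ℝ)
    (htri : ∀ u v x : V, w s(u, v) ≤ w s(u, x) + w s(x, v))
    (O : Finset V) (hO : Even O.card)
    (v : V) (c : (⊤ : SimpleGraph V).Walk v v) (hc : c.IsHamiltonianCycle) :
    ∃ M : Finset (Sym2 V), IsPerfectMatchingOn M O ∧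
      ∑ e ∈ M, w e ≤ (1 / 2) * (c.edges.map w).sum := by
  by_cases hO0 : O = ∅
  · refine ⟨∅, ?_, ?_⟩
    · subst hO0
      exact ⟨by simp, by simp, by simp⟩
    · simp only [Finset.sum_empty]
      have h0 : 0 ≤ (c.edges.map w).sum := List.sum_nonneg (by
        intro x hx; rcases List.mem_map.1 hx with ⟨e, _, rfl⟩; exact w_nonneg htri e)
      linarith
  · obtain ⟨a, ha⟩ := Finset.nonempty_iff_ne_empty.2 hO0
    have haS : a ∈ c.support := hc.mem_support a
    set c' := c.rotate a haS with hc'def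
    have hsum : (c'.edges.map w).sum = (c.edges.map w).sum :=
      ((SimpleGraph.Walk.rotate_edges c a haS).perm.map w).sum_eq
    set t := c'.support.tail with htdef
    have hrot : t ~r c.support.tail := SimpleGraph.Walk.support_rotate c a haS
    have ht_nodup : t.Nodup := hrot.nodup_iff.2 hc.isCycle.support_nodup
    have hcount :=
      (SimpleGraph.Walk.isHamiltonianCycle_iff_isCycle_and_support_count_tail_eq_one.1 hc).2
    have ht_mem : ∀ x : V, x ∈ t := by
      intro x
      rw [hrot.mem_iff]
      have hcx := hcount x
      exact List.count_pos_iff.1 (by omega)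
    have hsup : c'.support = a :: t := SimpleGraph.Walk.support_eq_cons c'
    have htne : t ≠ [] := by
      intro h; have := ht_mem a; rw [h] at this; simp at this
    obtain ⟨td, b, htd0⟩ := t.eq_nil_or_concat'.resolve_left htne
    have hba : b = a := by
      have h1 : c'.support.getLast? = some a := by
        rw [List.getLast?_eq_getLast (SimpleGraph.Walk.support_ne_nil c')]
        exact congrArg some (SimpleGraph.Walk.getLast_support c')
      rw [hsup, htd0,
        show a :: (td ++ [b]) = (a :: td) ++ [b] by simp,
        List.getLast?_concat] at h1
      exact Option.some_injective _ h1
    have htd : t = td ++ [a] := by rw [htd0, hba]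
    have had : a ∉ td := by
      have hnd := ht_nodup
      rw [htd, List.nodup_append] at hnd
      exact fun h => hnd.2.2 a h a (List.mem_singleton_self a) rfl
    set fd := td.filter (· ∈ O) with hfddef
    set fl := t.filter (· ∈ O) with hfldef
    have hfl : fl = fd ++ [a] := by
      rw [hfldef, htd, List.filter_append]
      simp [ha, hfddef]
    have hfl_nodup : fl.Nodup := ht_nodup.filter _
    have hfl_mem : ∀ x, x ∈ fl ↔ x ∈ O := by
      intro x; rw [hfldef, List.mem_filter]; simp [ht_mem x]
    have hflfin : fl.toFinset = O := by ext x; simp [hfl_mem x]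
    have hfllen : fl.length = O.card := by
      rw [← hflfin, List.toFinset_card_of_nodup hfl_nodup]
    set m := a :: fd with hmdef
    have hmfl : m ++ [a] = a :: fl := by rw [hmdef, hfl]; simp
    have hfd_nodup : fd.Nodup ∧ a ∉ fd := by
      have hnd := hfl_nodup
      rw [hfl, List.nodup_append] at hnd
      exact ⟨hnd.1, fun h => hnd.2.2 a h a (List.mem_singleton_self a) rfl⟩
    have hm_nodup : m.Nodup := List.nodup_cons.2 ⟨hfd_nodup.2, hfd_nodup.1⟩
    have hm_len : m.length = O.card := by
      have h1 : fl.length = fd.length + 1 := by rw [hfl]; simp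
      simp only [hmdef, List.length_cons]
      omega
    have hm_fin : m.toFinset = O := by
      ext x
      rw [List.mem_toFinset, ← hfl_mem x, hfl, hmdef]
      simp
      tauto
    have hsubl : List.Sublist fl t := List.filter_sublist
    have hineq1 : pathW w (a :: fl) ≤ pathW w (a :: t) := pathW_sublist htri hsubl a
    have hpath : pathW w (a :: t) = (c.edges.map w).sum := by
      rw [← hsup, ← walk_pathW w c', hsum]
    have hev : Even m.length := hm_len ▸ hO
    have hsplit := pairW w m hev a
    have hmt : m.tail ++ [a] = fl := by rw [hmdef, hfl]; simp
    rw [hmt, hmfl] at hsplit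
    have hM1 := pairs1_matching m hm_nodup hev
    have hev2 : Even fl.length := hfllen ▸ hO
    have hM2 := pairs1_matching fl hfl_nodup hev2
    rw [hm_fin] at hM1
    rw [hflfin] at hM2
    have hs1 : ∑ e ∈ (pairs1 m).toFinset, w e = ((pairs1 m).map w).sum :=
      List.sum_toFinset w (pairs1_nodup m hm_nodup)
    have hs2 : ∑ e ∈ (pairs1 fl).toFinset, w e = ((pairs1 fl).map w).sum :=
      List.sum_toFinset w (pairs1_nodup fl hfl_nodup)
    by_cases hle : ((pairs1 m).map w).sum ≤ ((pairs1 fl).map w).sum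
    · exact ⟨(pairs1 m).toFinset, hM1, by rw [hs1]; linarith⟩
    · exact ⟨(pairs1 fl).toFinset, hM2, by rw [hs2]; linarith⟩
end

section
/- Christofides bound: in a complete metric graph, if T is a spanning tree of weight at most (1+ε) times the minimum spanning tree weight, O is the set of odd-degree vertices of T, and M is a minimum-weight perfect matching on O, then w(T) + w(M) ≤ (3/2 + ε) times the minimum cost of a Hamiltonian cycle. -/
/-- Weight of a subgraph: the sum of the weights of its edges. -/
noncomputable def graphWeight {V : Type*} [Fintype V] (H : SimpleGraph V)
    (w : Sym2 V → ℝ) : ℝ :=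
  ∑ e ∈ H.edgeSet.toFinite.toFinset, w e

namespace ChristofidesAux

open SimpleGraph

variable {V : Type*} [DecidableEq V]

/-- weight with diagonals zeroed out -/
noncomputable def wd (w : Sym2 V → ℝ) (e : Sym2 V) : ℝ := if e.IsDiag then 0 else w e

/-- sum of weights along consecutive pairs of a list -/
noncomputable def chainSum (w : Sym2 V → ℝ) : List V → ℝ
  | [] => 0
  | [_] => 0
  | a :: b :: t => wd w s(a, b) + chainSum w (b :: t)

/-- alternating pairs of a list -/
def pairs1 : List V → List (Sym2 V)
  | [] => []
  | [_] => []
  | a :: b :: t => s(a, b) :: pairs1 t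

@[simp] lemma wd_diag' {w : Sym2 V → ℝ} (u : V) : wd w s(u, u) = 0 := by
  simp [wd]

lemma wd_eq' {w : Sym2 V → ℝ} {u v : V} (h : u ≠ v) : wd w s(u, v) = w s(u, v) := by
  simp [wd, Sym2.mk_isDiag_iff, h]

section weights

variable {w : Sym2 V → ℝ} (htri : ∀ u v x : V, w s(u, v) ≤ w s(u, x) + w s(x, v))
include htri

lemma w_nonneg (u v : V) : 0 ≤ w s(u, v) := by
  have h1 := htri u u u
  have h2 := htri u u v
  rw [show s(v, u) = s(u, v) from Sym2.eq_swap] at h2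
  linarith

lemma wd_nonneg (e : Sym2 V) : 0 ≤ wd w e := by
  induction e with
  | _ u v =>
    unfold wd
    split
    · exact le_refl 0
    · exact w_nonneg htri u v

lemma wd_le (e : Sym2 V) : wd w e ≤ w e := by
  induction e with
  | _ u v =>
    unfold wd
    split
    · exact w_nonneg htri u v
    · exact le_refl _

lemma wd_tri (u v x : V) : wd w s(u, v) ≤ wd w s(u, x) + wd w s(x, v) := by
  by_cases huv : u = v
  · subst huv
    rw [wd_diag']
    have := wd_nonneg htri s(u, x)
    have := wd_nonneg htri s(x, u)
    linarith
  by_cases hux : u = x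
  · subst hux
    rw [wd_diag']
    simp
  by_cases hxv : x = v
  · subst hxv
    rw [wd_diag' (w := w)]
    simp
  · rw [wd_eq' huv, wd_eq' hux, wd_eq' hxv]
    exact htri u v x

lemma chainSum_headChange : ∀ (m : List V) (a a' : V),
    chainSum w (a :: m) ≤ wd w s(a, a') + chainSum w (a' :: m) := by
  intro m a a'
  cases m with
  | nil => simpa [chainSum] using wd_nonneg htri s(a, a')
  | cons b t =>
    show wd w s(a, b) + chainSum w (b :: t) ≤ wd w s(a, a') + (wd w s(a', b) + chainSum w (b :: t))
    have := wd_tri htri a b a'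
    linarith

lemma chainBound {G : SimpleGraph V} : ∀ {x y : V} (p : G.Walk x y) (l : List V),
    l.Sublist p.support → chainSum w (x :: l ++ [y]) ≤ (p.edges.map (wd w)).sum := by
  intro x y p
  induction p with
  | nil =>
    intro l hl
    simp only [SimpleGraph.Walk.support_nil] at hl
    rcases List.sublist_singleton.mp hl with rfl | rfl
    · simp [chainSum, wd_diag']
    · show chainSum w [_,_,_] ≤ _
      simp [chainSum, wd_diag']
  | @cons x b y h q ih =>
    intro l hl
    rw [SimpleGraph.Walk.support_cons] at hl
    rw [SimpleGraph.Walk.edges_cons, List.map_cons, List.sum_cons]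
    rcases List.sublist_cons_iff.mp hl with hl' | ⟨l', rfl, hl'⟩
    · calc chainSum w (x :: l ++ [y]) ≤ wd w s(x, b) + chainSum w (b :: l ++ [y]) := by
            simpa using chainSum_headChange htri (l ++ [y]) x b
        _ ≤ wd w s(x, b) + (q.edges.map (wd w)).sum := by
            have := ih l hl'
            linarith
    · show chainSum w (x :: x :: (l' ++ [y])) ≤ _
      have h1 : chainSum w (x :: x :: (l' ++ [y])) = chainSum w (x :: l' ++ [y]) := by
        cases l' with
        | nil => simp [chainSum, wd_diag']
        | cons c t => simp [chainSum, wd_diag']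
      rw [h1]
      calc chainSum w (x :: l' ++ [y]) ≤ wd w s(x, b) + chainSum w (b :: l' ++ [y]) := by
            simpa using chainSum_headChange htri (l' ++ [y]) x b
        _ ≤ wd w s(x, b) + (q.edges.map (wd w)).sum := by
            have := ih l' hl'
            linarith

end weights

lemma chainSum_append_last {w : Sym2 V → ℝ} :
    ∀ (l : List V) (hl : l ≠ []) (z : V),
      chainSum w (l ++ [z]) = chainSum w l + wd w s(l.getLast hl, z) := by
  intro l
  induction l with
  | nil => intro h; cases h rfl
  | cons a t ih =>
    intro _ z
    cases t with
    | nil => simp [chainSum]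
    | cons b t' =>
      show wd w s(a, b) + chainSum w (b :: t' ++ [z]) = _
      rw [ih (by simp) z, List.getLast_cons_cons]
      show _ = wd w s(a, b) + chainSum w (b :: t') + _
      ring

/-- key identity: the two alternating matchings of `a::b::t` (cyclically) sum to the chain sum -/
lemma pairs_sum (w : Sym2 V → ℝ) :
    ∀ (t : List V), Even t.length → ∀ (a b z : V),
      (((pairs1 (a :: b :: t)).map (wd w)).sum + ((pairs1 (b :: (t ++ [z]))).map (wd w)).sum)
        = chainSum w (a :: b :: t ++ [z])
  | [], _, a, b, z => by
      simp [pairs1, chainSum]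
  | [c], h, _, _, _ => by
      simp at h
  | c :: d :: t', h, a, b, z => by
      have ht' : Even t'.length := by
        simpa [Nat.even_add_one] using h
      have IH := pairs_sum w t' ht' c d z
      show (wd w s(a,b) + ((pairs1 (c :: d :: t')).map (wd w)).sum)
          + (wd w s(b,c) + ((pairs1 (d :: (t' ++ [z]))).map (wd w)).sum) = _
      show _ = wd w s(a,b) + (wd w s(b,c) + chainSum w (c :: d :: t' ++ [z]))
      rw [← IH]
      ring


section pairsProps

lemma pairs1_mem_mem : ∀ (l : List V), ∀ e ∈ pairs1 l, ∀ x ∈ e, x ∈ l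
  | [], e, he, x, hx => by simp [pairs1] at he
  | [_], e, he, x, hx => by simp [pairs1] at he
  | a :: b :: t, e, he, x, hx => by
    simp only [pairs1, List.mem_cons] at he
    rcases he with rfl | he
    · rcases Sym2.mem_iff.mp hx with rfl | rfl <;> simp
    · have := pairs1_mem_mem t e he x hx
      simp [this]

lemma pairs1_cover : ∀ (l : List V), Even l.length → ∀ x ∈ l, ∃ e ∈ pairs1 l, x ∈ e
  | [], _, x, hx => by simp at hx
  | [_], h, _, _ => by simp at h
  | a :: b :: t, h, x, hx => by
    rcases List.mem_cons.mp hx with rfl | hx'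
    · exact ⟨s(x, b), by simp [pairs1], by simp⟩
    rcases List.mem_cons.mp hx' with rfl | hx''
    · exact ⟨s(a, x), by simp [pairs1], by simp⟩
    · obtain ⟨e, he, hxe⟩ :=
        pairs1_cover t (by simpa [Nat.even_add_one] using h) x hx''
      exact ⟨e, by simp [pairs1, he], hxe⟩

lemma pairs1_nondiag : ∀ (l : List V), l.Nodup → ∀ e ∈ pairs1 l, ¬e.IsDiag
  | [], _, e, he => by simp [pairs1] at he
  | [_], _, e, he => by simp [pairs1] at he
  | a :: b :: t, hnd, e, he => by
    simp only [pairs1, List.mem_cons] at he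
    rcases he with rfl | he
    · have hab : a ≠ b := by
        intro h; subst h; simp at hnd
      simp [Sym2.mk_isDiag_iff, hab]
    · exact pairs1_nondiag t (by simp at hnd; exact hnd.2.2) e he

lemma pairs1_pairwise : ∀ (l : List V), l.Nodup →
    (pairs1 l).Pairwise fun e f => ∀ x, x ∈ e → x ∉ f
  | [], _ => by simp [pairs1]
  | [_], _ => by simp [pairs1]
  | a :: b :: t, hnd => by
    simp only [List.nodup_cons, List.mem_cons] at hnd
    show List.Pairwise _ (s(a, b) :: pairs1 t)
    refine List.Pairwise.cons ?_ (pairs1_pairwise t hnd.2.2)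
    intro f hf x hx hxf
    have hxt : x ∈ t := pairs1_mem_mem t f hf x hxf
    rcases Sym2.mem_iff.mp hx with rfl | rfl
    · exact hnd.1 (Or.inr hxt)
    · exact hnd.2.1 hxt

lemma pairs1_nodup (l : List V) (hnd : l.Nodup) : (pairs1 l).Nodup := by
  refine List.Pairwise.imp ?_ (pairs1_pairwise l hnd)
  intro e f h
  intro hef
  subst hef
  exact h e.out.1 (Sym2.out_fst_mem e) (Sym2.out_fst_mem e)

lemma sym2_rel_symm : Symmetric (fun e f : Sym2 V => ∀ x, x ∈ e → x ∉ f) := by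
  intro e f h x hxf hxe
  exact h x hxe hxf

lemma pairs1_matching (l : List V) (hnd : l.Nodup) (hev : Even l.length) :
    IsPerfectMatchingOn (pairs1 l).toFinset l.toFinset := by
  refine ⟨?_, ?_, ?_⟩
  · intro e he
    simp only [Finset.coe_sort_coe, Finset.mem_coe, List.mem_toFinset] at he
    rw [SimpleGraph.edgeSet_top]
    exact pairs1_nondiag l hnd e he
  · intro e he f hf hne
    simp only [Finset.coe_sort_coe, Finset.mem_coe, List.mem_toFinset] at he hf
    haveI : Std.Symm (fun e f : Sym2 V => ∀ x, x ∈ e → x ∉ f) := ⟨fun _ _ h => sym2_rel_symm h⟩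
    exact (pairs1_pairwise l hnd).forall he hf hne
  · intro x
    constructor
    · intro hx
      obtain ⟨e, he, hxe⟩ := pairs1_cover l hev x (List.mem_toFinset.mp hx)
      exact ⟨e, List.mem_toFinset.mpr he, hxe⟩
    · rintro ⟨e, he, hxe⟩
      exact List.mem_toFinset.mpr (pairs1_mem_mem l e (List.mem_toFinset.mp he) x hxe)

lemma wd_eq_of_nondiag {w : Sym2 V → ℝ} {e : Sym2 V} (h : ¬e.IsDiag) : wd w e = w e := by
  simp [wd, h]

lemma pairs1_sum (w : Sym2 V → ℝ) (l : List V) (hnd : l.Nodup) :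
    ∑ e ∈ (pairs1 l).toFinset, w e = ((pairs1 l).map (wd w)).sum := by
  rw [List.sum_toFinset _ (pairs1_nodup l hnd)]
  exact congrArg List.sum (List.map_congr_left fun e he =>
    (wd_eq_of_nondiag (pairs1_nondiag l hnd e he)).symm)

end pairsProps

section graphs

lemma last_edge {G : SimpleGraph V} {x y : V} (r : G.Walk x y) (h : ¬r.Nil) :
    ∃ z, G.Adj z y ∧ s(z, y) ∈ r.edges := by
  induction r with
  | nil => simp at h
  | @cons u m y hadj q ih =>
    by_cases hq : q.Nil
    · cases q with
      | nil => exact ⟨u, hadj, by simp⟩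
      | cons _ _ => simp at hq
    · obtain ⟨z, hz, hm⟩ := ih hq
      exact ⟨z, hz, by simp [hm]⟩

lemma pendant_acyclic {G : SimpleGraph V} (hG : G.IsAcyclic) {a b : V} (hab : a ≠ b)
    (ha : ∀ e ∈ G.edgeSet, a ∉ e) :
    (G ⊔ SimpleGraph.fromEdgeSet {s(a, b)}).IsAcyclic := by
  set H := G ⊔ SimpleGraph.fromEdgeSet {s(a, b)} with hH
  have hAdjA : ∀ z : V, H.Adj a z → z = b := by
    intro z hz
    rcases hz with h | h
    · exact absurd (Sym2.mem_mk_left a z) (ha _ h)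
    · rw [SimpleGraph.fromEdgeSet_adj] at h
      have := h.1
      simp only [Set.mem_singleton_iff] at this
      rcases Sym2.eq_iff.mp this with ⟨_, hzb⟩ | ⟨hab', _⟩
      · exact hzb
      · exact absurd hab' hab
  have key : ∀ (c1 : H.Walk a a), ¬c1.IsCycle := by
    intro c1 hc1
    cases c1 with
    | nil => exact hc1.ne_nil rfl
    | @cons _ m _ hadj r =>
      have hmb : m = b := hAdjA m hadj
      have hrnil : ¬r.Nil := SimpleGraph.Walk.not_nil_of_ne (Ne.symm hadj.ne)
      obtain ⟨z, hz, hm⟩ := last_edge r hrnil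
      have hzb : z = b := hAdjA z hz.symm
      have hnd := hc1.edges_nodup
      rw [SimpleGraph.Walk.edges_cons, List.nodup_cons] at hnd
      rw [hzb, ← hmb, Sym2.eq_swap] at hm
      exact hnd.1 hm
  intro u c0 hc0
  by_cases hmem : a ∈ c0.support
  · exact key (c0.rotate a hmem) (hc0.rotate hmem)
  · have hedges : ∀ e ∈ c0.edges, e ∈ G.edgeSet := by
      intro e he
      have heH : e ∈ H.edgeSet := c0.edges_subset_edgeSet he
      rw [hH, SimpleGraph.edgeSet_sup] at heH
      rcases heH with h | h
      · exact h
      · exfalso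
        rw [SimpleGraph.edgeSet_fromEdgeSet] at h
        have : e = s(a, b) := h.1
        subst this
        exact hmem (c0.fst_mem_support_of_mem_edges he)
    exact hG (c0.transfer G hedges) (hc0.transfer hedges)

lemma reach_fromEdgeSet {G : SimpleGraph V} : ∀ {a b : V} (p : G.Walk a b) (x : V),
    x ∈ p.support → (SimpleGraph.fromEdgeSet {e | e ∈ p.edges}).Reachable a x := by
  intro a b p
  induction p with
  | nil =>
    intro x hx
    simp only [SimpleGraph.Walk.support_nil, List.mem_singleton] at hx
    subst hx
    exact SimpleGraph.Reachable.refl _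
  | @cons u m b hadj q ih =>
    intro x hx
    rw [SimpleGraph.Walk.support_cons, List.mem_cons] at hx
    have hmono : SimpleGraph.fromEdgeSet {e | e ∈ q.edges} ≤
        SimpleGraph.fromEdgeSet {e | e ∈ (SimpleGraph.Walk.cons hadj q).edges} := by
      apply SimpleGraph.fromEdgeSet_mono
      intro e he
      simp only [Set.mem_setOf_eq, SimpleGraph.Walk.edges_cons, List.mem_cons]
      exact Or.inr he
    have hadj' : (SimpleGraph.fromEdgeSet {e | e ∈ (SimpleGraph.Walk.cons hadj q).edges}).Adj u m := by
      rw [SimpleGraph.fromEdgeSet_adj]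
      exact ⟨by simp, hadj.ne⟩
    rcases hx with rfl | hx
    · exact SimpleGraph.Reachable.refl _
    · exact hadj'.reachable.trans ((ih x hx).mono hmono)

lemma path_acyclic {G : SimpleGraph V} : ∀ {x y : V} (p : G.Walk x y), p.IsPath →
    (SimpleGraph.fromEdgeSet {e | e ∈ p.edges}).IsAcyclic := by
  intro x y p
  induction p with
  | nil =>
    intro _
    simp only [SimpleGraph.Walk.edges_nil, List.not_mem_nil, Set.setOf_false,
      SimpleGraph.fromEdgeSet_empty]
    exact SimpleGraph.isAcyclic_bot
  | @cons u m b hadj q ih =>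
    intro hp
    rw [SimpleGraph.Walk.cons_isPath_iff] at hp
    have hq := ih hp.1
    have ha : ∀ e ∈ (SimpleGraph.fromEdgeSet {e | e ∈ q.edges}).edgeSet, u ∉ e := by
      intro e he hu
      rw [SimpleGraph.edgeSet_fromEdgeSet] at he
      have heq : e ∈ q.edges := he.1
      induction e with
      | _ s t =>
        rcases Sym2.mem_iff.mp hu with rfl | rfl
        · exact hp.2 (q.fst_mem_support_of_mem_edges heq)
        · exact hp.2 (q.snd_mem_support_of_mem_edges heq)
    have hset : {e : Sym2 V | e ∈ (SimpleGraph.Walk.cons hadj q).edges}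
        = {e | e ∈ q.edges} ∪ {s(u, m)} := by
      ext e
      simp [SimpleGraph.Walk.edges_cons, or_comm]
    rw [hset, SimpleGraph.fromEdgeSet_union]
    exact pendant_acyclic hq hadj.ne ha

end graphs

end ChristofidesAux

open ChristofidesAux SimpleGraph in
/-- Christofides bound. -/
theorem christofides_bound {V : Type*} [Fintype V] [DecidableEq V]
    (w : Sym2 V → ℝ)
    (htri : ∀ u v x : V, w s(u, v) ≤ w s(u, x) + w s(x, v))
    (ε : ℝ) (hε : 0 ≤ ε)
    (T : SimpleGraph V) (hTconn : T.Connected) (hTacyc : T.IsAcyclic)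
    (hTapprox : ∀ T' : SimpleGraph V, T'.Connected → T'.IsAcyclic →
      graphWeight T w ≤ (1 + ε) * graphWeight T' w)
    (O : Finset V) (hO : ∀ u : V, u ∈ O ↔ Odd (Nat.card (T.neighborSet u)))
    (M : Finset (Sym2 V)) (hM : IsPerfectMatchingOn M O)
    (hMmin : ∀ M' : Finset (Sym2 V), IsPerfectMatchingOn M' O →
      ∑ e ∈ M, w e ≤ ∑ e ∈ M', w e)
    (v : V) (c : (⊤ : SimpleGraph V).Walk v v) (hc : c.IsHamiltonianCycle) :
    graphWeight T w + ∑ e ∈ M, w e ≤ (3 / 2 + ε) * (c.edges.map w).sum := by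
  classical
  have hw0 : ∀ e : Sym2 V, 0 ≤ w e := by
    intro e; induction e with | _ u v => exact w_nonneg htri u v
  cases c with
  | nil => exact absurd rfl hc.isCycle.ne_nil
  | @cons _ b _ hadj q =>
  -- basic facts about q
  have hqnodup : q.support.Nodup := by
    have := hc.isCycle.support_nodup
    rwa [Walk.support_cons, List.tail_cons] at this
  have huniv : ∀ x : V, x ∈ q.support := by
    intro x
    have := hc.mem_support x
    rw [Walk.support_cons, List.mem_cons] at this
    rcases this with rfl | h
    · exact q.end_mem_support
    · exact h
  have hqpath : q.IsPath := Walk.IsPath.mk' hqnodup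
  have hedges := hc.isCycle.edges_nodup
  rw [Walk.edges_cons, List.nodup_cons] at hedges
  obtain ⟨hvb_notin, hqe⟩ := hedges
  have hcsum : ((Walk.cons hadj q).edges.map w).sum = w s(v, b) + (q.edges.map w).sum := by
    rw [Walk.edges_cons, List.map_cons, List.sum_cons]
  have hqsum_nonneg : 0 ≤ (q.edges.map w).sum := by
    apply List.sum_nonneg
    intro x hx
    obtain ⟨e, _, rfl⟩ := List.mem_map.mp hx
    exact hw0 e
  have hcsum_nonneg : 0 ≤ ((Walk.cons hadj q).edges.map w).sum := by
    rw [hcsum]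
    have := hw0 s(v, b)
    linarith
  -- Part 1 : the spanning tree bound
  have part1 : graphWeight T w ≤ (1 + ε) * ((Walk.cons hadj q).edges.map w).sum := by
    set T' := SimpleGraph.fromEdgeSet {e | e ∈ q.edges} with hT'
    have hT'conn : T'.Connected := by
      haveI : Nonempty V := ⟨v⟩
      refine SimpleGraph.Connected.mk ?_
      intro x y
      exact (reach_fromEdgeSet q x (huniv x)).symm.trans (reach_fromEdgeSet q y (huniv y))
    have hT'acyc : T'.IsAcyclic := path_acyclic q hqpath
    have hT'weight : graphWeight T' w = (q.edges.map w).sum := by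
      unfold graphWeight
      have hfin : T'.edgeSet.toFinite.toFinset = q.edges.toFinset := by
        ext e
        simp only [Set.Finite.mem_toFinset, List.mem_toFinset, hT',
          SimpleGraph.edgeSet_fromEdgeSet, Set.mem_diff, Set.mem_setOf_eq]
        constructor
        · exact fun h => h.1
        · intro h
          refine ⟨h, ?_⟩
          have h2 := q.edges_subset_edgeSet h
          rw [SimpleGraph.edgeSet_top] at h2
          exact h2
      rw [hfin, List.sum_toFinset _ hqe]
    have h1 := hTapprox T' hT'conn hT'acyc
    have h2 : graphWeight T' w ≤ ((Walk.cons hadj q).edges.map w).sum := by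
      rw [hT'weight, hcsum]
      have := hw0 s(v, b)
      linarith
    calc graphWeight T w ≤ (1 + ε) * graphWeight T' w := h1
      _ ≤ (1 + ε) * ((Walk.cons hadj q).edges.map w).sum :=
        mul_le_mul_of_nonneg_left h2 (by linarith)
  -- Part 2 : the matching bound
  have part2 : ∑ e ∈ M, w e ≤ (1 / 2) * ((Walk.cons hadj q).edges.map w).sum := by
    set os : List V := q.support.filter (· ∈ O) with hosdef
    have hosnodup : os.Nodup := hqnodup.filter _
    have hosset : os.toFinset = O := by
      ext x
      simp [hosdef, List.mem_filter, huniv x]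
    -- O has even cardinality
    have hdisj : ∀ e ∈ M, ∀ f ∈ M, e ≠ f →
        Disjoint (O.filter (fun x => x ∈ e)) (O.filter (fun x => x ∈ f)) := by
      intro e he f hf hne
      rw [Finset.disjoint_left]
      intro x hx1 hx2
      rw [Finset.mem_filter] at hx1 hx2
      exact hM.2.1 (Finset.mem_coe.mpr he) (Finset.mem_coe.mpr hf) hne x hx1.2 hx2.2
    have hOeq : O = M.biUnion (fun e => O.filter (fun x => x ∈ e)) := by
      ext x
      simp only [Finset.mem_biUnion, Finset.mem_filter]
      constructor
      · intro hx
        obtain ⟨e, heM, hxe⟩ := (hM.2.2 x).mp hx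
        exact ⟨e, heM, hx, hxe⟩
      · rintro ⟨e, heM, hx, _⟩; exact hx
    have hcard2 : ∀ e ∈ M, (O.filter (fun x => x ∈ e)).card = 2 := by
      intro e heM
      have hnd : ¬e.IsDiag := by
        have h2 := hM.1 (Finset.mem_coe.mpr heM)
        rwa [SimpleGraph.edgeSet_top, Set.mem_compl_iff, Sym2.mem_diagSet] at h2
      obtain ⟨x, y, rfl⟩ : ∃ x y, e = s(x, y) := ⟨e.out.1, e.out.2, e.out_eq.symm⟩
      have hxy : x ≠ y := by simpa [Sym2.mk_isDiag_iff] using hnd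
      have hfil : O.filter (fun z => z ∈ s(x, y)) = {x, y} := by
        ext z
        simp only [Finset.mem_filter, Sym2.mem_iff, Finset.mem_insert, Finset.mem_singleton]
        constructor
        · rintro ⟨_, h⟩; exact h
        · intro h
          exact ⟨(hM.2.2 z).mpr ⟨s(x, y), heM, Sym2.mem_iff.mpr h⟩, h⟩
      rw [hfil, Finset.card_insert_of_notMem (by simpa using hxy), Finset.card_singleton]
    have hOcard : O.card = 2 * M.card := by
      rw [hOeq, Finset.card_biUnion hdisj, Finset.sum_congr rfl hcard2]
      rw [Finset.sum_const, smul_eq_mul, mul_comm]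
    have hoslen : Even os.length := by
      rw [← List.toFinset_card_of_nodup hosnodup, hosset, hOcard]
      exact even_two_mul _
    -- case split on os
    obtain hcase | ⟨u1, rest, hcase⟩ : os = [] ∨ ∃ u1 rest, os = u1 :: rest := by
      cases os with
      | nil => exact Or.inl rfl
      | cons a t => exact Or.inr ⟨a, t, rfl⟩
    · -- O is empty
      have hOempty : O = ∅ := by rw [← hosset, hcase]; simp
      have hempty : IsPerfectMatchingOn (∅ : Finset (Sym2 V)) O := by
        refine ⟨by simp, by simp, ?_⟩
        intro x
        simp [hOempty]
      have := hMmin ∅ hempty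
      simp only [Finset.sum_empty] at this
      linarith
    · -- O is nonempty
      obtain ⟨u2, t, hrest⟩ : ∃ u2 t, rest = u2 :: t := by
        cases rest with
        | nil =>
          exfalso
          rw [hcase] at hoslen
          simp at hoslen
        | cons a s => exact ⟨a, s, rfl⟩
      have hteven : Even t.length := by
        rw [hcase, hrest] at hoslen
        simpa [Nat.even_add_one] using hoslen
      -- the two matchings
      have hos2perm : (rest ++ [u1]).Perm os := by
        rw [hcase]; exact List.perm_append_singleton u1 rest
      have hos2nodup : (rest ++ [u1]).Nodup := hos2perm.nodup_iff.mpr hosnodup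
      have hos2even : Even (rest ++ [u1]).length := by
        rwa [hos2perm.length_eq]
      have hos2set : (rest ++ [u1]).toFinset = O := by
        rw [← hosset]
        ext x
        simp only [List.mem_toFinset]
        exact hos2perm.mem_iff
      have hm1 : IsPerfectMatchingOn (pairs1 os).toFinset O := by
        rw [← hosset]; exact pairs1_matching os hosnodup hoslen
      have hm2 : IsPerfectMatchingOn (pairs1 (rest ++ [u1])).toFinset O := by
        rw [← hos2set]; exact pairs1_matching _ hos2nodup hos2even
      have hb1 : ∑ e ∈ M, w e ≤ ((pairs1 os).map (wd w)).sum := by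
        have := hMmin _ hm1
        rwa [pairs1_sum w os hosnodup] at this
      have hb2 : ∑ e ∈ M, w e ≤ ((pairs1 (rest ++ [u1])).map (wd w)).sum := by
        have := hMmin _ hm2
        rwa [pairs1_sum w _ hos2nodup] at this
      -- key identity
      have hkey : ((pairs1 os).map (wd w)).sum + ((pairs1 (rest ++ [u1])).map (wd w)).sum
          = chainSum w (os ++ [u1]) := by
        rw [hcase, hrest]
        have h2 : (u2 :: t) ++ [u1] = u2 :: (t ++ [u1]) := by simp
        rw [h2]
        exact pairs_sum w t hteven u1 u2 u1
      -- chain bound through the cycle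
      have hsub : os.Sublist (Walk.cons hadj q).support := by
        rw [Walk.support_cons]
        exact (List.filter_sublist (l := q.support)).trans (List.sublist_cons_self v q.support)
      have hchain := chainBound htri (Walk.cons hadj q) os hsub
      -- unfold the chain sums
      have hclast : chainSum w (os ++ [u1]) =
          chainSum w os + wd w s(os.getLast (by rw [hcase]; simp), u1) :=
        chainSum_append_last os _ u1
      have hclast2 : chainSum w (os ++ [v]) =
          chainSum w os + wd w s(os.getLast (by rw [hcase]; simp), v) :=
        chainSum_append_last os _ v
      have hcv : chainSum w (v :: os ++ [v]) = wd w s(v, u1) + chainSum w (os ++ [v]) := by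
        rw [hcase]
        rfl
      have htriv := wd_tri htri (os.getLast (by rw [hcase]; simp)) u1 v
      have hwdle : ((Walk.cons hadj q).edges.map (wd w)).sum
          ≤ ((Walk.cons hadj q).edges.map w).sum := by
        apply List.sum_le_sum
        intro e _
        exact wd_le htri e
      -- combine
      have hfinal : 2 * (∑ e ∈ M, w e) ≤ ((Walk.cons hadj q).edges.map w).sum := by
        have h1 : 2 * (∑ e ∈ M, w e) ≤ chainSum w (os ++ [u1]) := by
          rw [← hkey]; linarith
        have h2 : chainSum w (os ++ [u1]) ≤ chainSum w (v :: os ++ [v]) := by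
          rw [hclast, hcv, hclast2]; linarith
        linarith
      linarith
  linarith
end
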